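/- The function ι(p) := p·ln(1 + 1/(2κp)) + p − μ + a has a root in (0, ∞) if and only if μ > a; moreover any such root is unique and lies in the open interval (0, μ − a). -/

import Mathlib

open Real Set

theorem iota_root_iff (κ μ a : ℝ) (hκ : 0 < κ) :
    ((∃ p ∈ Set.Ioi (0 : ℝ),
        p * Real.log (1 + 1 / (2 * κ * p)) + p - μ + a = 0) ↔ μ > a) ∧
    (∀ p ∈ Set.Ioi (0 : ℝ),
        p * Real.log (1 + 1 / (2 * κ * p)) + p - μ + a = 0 →
        p ∈ Set.Ioo 0 (μ - a) ∧
        ∀ q ∈ Set.Ioi (0 : ℝ),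
          q * Real.log (1 + 1 / (2 * κ * q)) + q - μ + a = 0 → q = p) := by
  have hκ2 : (0:ℝ) < 2 * κ := by linarith
  set c : ℝ := 1 / (2 * κ) with hcdef
  have hc0 : 0 < c := by positivity
  have hrw : ∀ p : ℝ, 1 / (2 * κ * p) = c / p := fun p => (div_div 1 (2*κ) p).symm
  set f : ℝ → ℝ := fun p => p * Real.log (1 + c / p) + p - μ + a with hfdef
  have heq : ∀ p : ℝ, p * Real.log (1 + 1 / (2 * κ * p)) + p - μ + a = f p := by
    intro p; rw [hrw p]
  have hlogpos : ∀ p : ℝ, 0 < p → 0 < Real.log (1 + c / p) := by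
    intro p hp
    apply Real.log_pos
    have : 0 < c / p := by positivity
    linarith
  have hroot_loc : ∀ p : ℝ, 0 < p → f p = 0 → p < μ - a := by
    intro p hp hfp
    have h1 : 0 < p * Real.log (1 + c / p) := mul_pos hp (hlogpos p hp)
    simp only [hfdef] at hfp
    linarith
  have hderiv : ∀ x : ℝ, x ∈ Ioi (0:ℝ) →
      HasDerivAt f (Real.log (1 + c / x) + x * ((c * -(x^2)⁻¹) / (1 + c / x)) + 1) x := by
    intro x hx
    have hx0 : (0:ℝ) < x := hx
    have h1x : 0 < 1 + c / x := by positivity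
    have h1 : HasDerivAt (fun p : ℝ => 1 + c / p) (c * -(x^2)⁻¹) x := by
      have := ((hasDerivAt_inv hx0.ne').const_mul c).const_add 1
      simpa [div_eq_mul_inv, mul_comm] using this
    have h2 : HasDerivAt (fun p : ℝ => Real.log (1 + c / p))
        ((c * -(x^2)⁻¹) / (1 + c / x)) x := h1.log h1x.ne'
    have h3 := ((hasDerivAt_id x).mul h2).add (hasDerivAt_id x)
    have h4 := (h3.sub_const μ).add_const a
    refine h4.congr_deriv ?_
    simp only [id_eq]
    ring
  have hderiv_pos : ∀ x : ℝ, x ∈ Ioi (0:ℝ) →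
      0 < Real.log (1 + c / x) + x * ((c * -(x^2)⁻¹) / (1 + c / x)) + 1 := by
    intro x hx
    have hx0 : (0:ℝ) < x := hx
    have h1x : 0 < 1 + c / x := by positivity
    have key : x * ((c * -(x^2)⁻¹) / (1 + c / x)) = -(c / (x + c)) := by
      field_simp
    rw [key]
    have h2 : c / (x + c) < 1 := by
      rw [div_lt_one (by linarith)]; linarith
    have := hlogpos x hx0
    linarith
  have hcont : ContinuousOn f (Ioi 0) := fun x hx =>
    ((hderiv x hx).continuousAt).continuousWithinAt
  have hmono : StrictMonoOn f (Ioi 0) := by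
    apply strictMonoOn_of_deriv_pos (convex_Ioi 0) hcont
    intro x hx
    rw [interior_Ioi] at hx
    rw [(hderiv x hx).deriv]
    exact hderiv_pos x hx
  have hbound : ∀ p : ℝ, 0 < p → p * Real.log (1 + c / p) ≤ 2 * Real.sqrt (c * p) := by
    intro p hp
    have h1x : (0:ℝ) ≤ 1 + c / p := by positivity
    have hs : 0 < Real.sqrt (1 + c / p) := Real.sqrt_pos.mpr (by positivity)
    have e1 : Real.log (1 + c / p) = 2 * Real.log (Real.sqrt (1 + c / p)) := by
      rw [Real.log_sqrt h1x]; ring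
    have e2 : Real.log (Real.sqrt (1 + c / p)) ≤ Real.sqrt (1 + c / p) - 1 :=
      Real.log_le_sub_one_of_pos hs
    have e3 : Real.sqrt (1 + c / p) ≤ 1 + Real.sqrt (c / p) := by
      rw [show (1 : ℝ) + Real.sqrt (c / p) = Real.sqrt ((1 + Real.sqrt (c/p))^2) from
        (Real.sqrt_sq (by positivity)).symm]
      apply Real.sqrt_le_sqrt
      have := Real.sq_sqrt (show (0:ℝ) ≤ c / p by positivity)
      nlinarith [Real.sqrt_nonneg (c / p)]
    have e4 : Real.log (1 + c / p) ≤ 2 * Real.sqrt (c / p) := by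
      calc Real.log (1 + c / p) = 2 * Real.log (Real.sqrt (1 + c / p)) := e1
        _ ≤ 2 * (Real.sqrt (1 + c / p) - 1) := by linarith
        _ ≤ 2 * Real.sqrt (c / p) := by linarith
    have e5 : p * Real.sqrt (c / p) = Real.sqrt (c * p) := by
      have h2 : c * p = (p * Real.sqrt (c/p))^2 := by
        rw [mul_pow, Real.sq_sqrt (show (0:ℝ) ≤ c/p by positivity)]
        field_simp
      rw [h2, Real.sqrt_sq (by positivity)]
    calc p * Real.log (1 + c / p) ≤ p * (2 * Real.sqrt (c / p)) :=
          mul_le_mul_of_nonneg_left e4 hp.le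
      _ = 2 * (p * Real.sqrt (c / p)) := by ring
      _ = 2 * Real.sqrt (c * p) := by rw [e5]
  -- existence
  have hex : μ > a → ∃ p ∈ Ioi (0:ℝ), f p = 0 := by
    intro hμa
    set δ : ℝ := μ - a with hδdef
    have hδ : 0 < δ := by simp [hδdef]; linarith
    set p₀ : ℝ := min (δ/2) (δ^2/(16*c)) with hp₀def
    have hp₀pos : 0 < p₀ := by
      apply lt_min (by linarith) (by positivity)
    have hp₀1 : p₀ ≤ δ/2 := min_le_left _ _
    have hp₀2 : p₀ ≤ δ^2/(16*c) := min_le_right _ _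
    have hle : p₀ ≤ δ := by linarith
    have hflo : f p₀ ≤ 0 := by
      have hb := hbound p₀ hp₀pos
      have h1 : c * p₀ ≤ δ^2/16 := by
        calc c * p₀ ≤ c * (δ^2/(16*c)) := mul_le_mul_of_nonneg_left hp₀2 hc0.le
          _ = δ^2/16 := by field_simp
      have h2 : Real.sqrt (c * p₀) ≤ δ/4 := by
        calc Real.sqrt (c * p₀) ≤ Real.sqrt (δ^2/16) := Real.sqrt_le_sqrt h1
          _ = δ/4 := by
              rw [show δ^2/16 = (δ/4)^2 by ring, Real.sqrt_sq (by linarith)]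
      simp only [hfdef, hδdef] at *
      linarith
    have hfhi : 0 ≤ f δ := by
      have h1 : 0 < δ * Real.log (1 + c / δ) := mul_pos hδ (hlogpos δ hδ)
      simp only [hfdef, hδdef] at *
      linarith
    have hsub : Icc p₀ δ ⊆ Ioi (0:ℝ) := fun x hx => lt_of_lt_of_le hp₀pos hx.1
    have := intermediate_value_Icc hle (hcont.mono hsub)
    obtain ⟨p, hpmem, hfp⟩ := this ⟨hflo, hfhi⟩
    exact ⟨p, hsub hpmem, hfp⟩
  constructor
  · constructor
    · rintro ⟨p, hp, hfp⟩
      rw [heq] at hfp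
      have := hroot_loc p hp hfp
      have hp' : (0:ℝ) < p := hp
      linarith
    · intro hμa
      obtain ⟨p, hp, hfp⟩ := hex hμa
      exact ⟨p, hp, by rw [heq]; exact hfp⟩
  · intro p hp hfp
    rw [heq] at hfp
    refine ⟨⟨hp, hroot_loc p hp hfp⟩, ?_⟩
    intro q hq hfq
    rw [heq] at hfq
    exact hmono.injOn hq hp (by rw [hfq, hfp])
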